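/- Let (A, B, ψ, J, K) be a cylindrical bialgebra and set 𝕂 = R^ψ_{21}·(1⊗K)·R ∈ A ⊗ A. Then: (1) 𝕂·Δ(b) = (id⊗ψ)(Δ(b))·𝕂 for all b ∈ B; (2) (Δ⊗id)(𝕂) = R^ψ_{32}·𝕂_{13}·R_{23} in A^{⊗3}; (3) (id⊗Δ)(𝕂) = J^{-1}_{23}·𝕂_{13}·R^ψ_{23}·𝕂_{12} in A^{⊗3}; (4) (ε⊗id)(𝕂) = K. Consequently (A, B, ψ, J, 𝕂) is a reflection bialgebra if and only if 𝕂 ∈ B ⊗ A. -/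

import Mathlib

open TensorProduct

section Defs
variable (k A : Type*) [CommSemiring k] [Semiring A]

section Alg
variable [Algebra k A]

noncomputable def emb12 : A ⊗[k] A →ₐ[k] A ⊗[k] (A ⊗[k] A) :=
  Algebra.TensorProduct.map (AlgHom.id k A) Algebra.TensorProduct.includeLeft

noncomputable def emb13 : A ⊗[k] A →ₐ[k] A ⊗[k] (A ⊗[k] A) :=
  Algebra.TensorProduct.map (AlgHom.id k A) Algebra.TensorProduct.includeRight

noncomputable def emb23 : A ⊗[k] A →ₐ[k] A ⊗[k] (A ⊗[k] A) :=
  Algebra.TensorProduct.includeRight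

noncomputable def flip2 : A ⊗[k] A ≃ₐ[k] A ⊗[k] A := Algebra.TensorProduct.comm k A A

noncomputable def psiL (ψ : A ≃ₐ[k] A) : A ⊗[k] A →ₐ[k] A ⊗[k] A :=
  Algebra.TensorProduct.map ψ.toAlgHom (AlgHom.id k A)

noncomputable def psiR (ψ : A ≃ₐ[k] A) : A ⊗[k] A →ₐ[k] A ⊗[k] A :=
  Algebra.TensorProduct.map (AlgHom.id k A) ψ.toAlgHom

noncomputable def psiBoth (ψ : A ≃ₐ[k] A) : A ⊗[k] A →ₐ[k] A ⊗[k] A :=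
  Algebra.TensorProduct.map ψ.toAlgHom ψ.toAlgHom

noncomputable def sub2 (B : Subalgebra k A) : Submodule k (A ⊗[k] A) :=
  Submodule.span k {t : A ⊗[k] A | ∃ x ∈ B, ∃ y : A, t = x ⊗ₜ[k] y}

end Alg

variable [Bialgebra k A]

noncomputable def cop : A →ₐ[k] A ⊗[k] A := Bialgebra.comulAlgHom k A

noncomputable def copOp : A →ₐ[k] A ⊗[k] A := (flip2 k A).toAlgHom.comp (cop k A)

noncomputable def cou : A →ₐ[k] k := Bialgebra.counitAlgHom k A

noncomputable def copL : A ⊗[k] A →ₐ[k] A ⊗[k] (A ⊗[k] A) :=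
  (Algebra.TensorProduct.assoc k k k A A A).toAlgHom.comp
    (Algebra.TensorProduct.map (cop k A) (AlgHom.id k A))

noncomputable def copR : A ⊗[k] A →ₐ[k] A ⊗[k] (A ⊗[k] A) :=
  Algebra.TensorProduct.map (AlgHom.id k A) (cop k A)

noncomputable def couL : A ⊗[k] A →ₐ[k] A :=
  (Algebra.TensorProduct.lid k A).toAlgHom.comp
    (Algebra.TensorProduct.map (cou k A) (AlgHom.id k A))

noncomputable def couR : A ⊗[k] A →ₐ[k] A :=
  (Algebra.TensorProduct.rid k k A).toAlgHom.comp
    (Algebra.TensorProduct.map (AlgHom.id k A) (cou k A))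

structure QTriangular (R : A ⊗[k] A) : Prop where
  isUnit : IsUnit R
  intertwine : ∀ x : A, R * cop k A x = copOp k A x * R
  coproduct_left : copL k A R = emb13 k A R * emb23 k A R
  coproduct_right : copR k A R = emb13 k A R * emb12 k A R

end Defs

section QSP
variable (k A : Type*) [CommSemiring k] [Semiring A] [Bialgebra k A]

/-- A twist pair `(ψ, J)`: `J` is a Drinfeld twist and `A^{cop,ψ} = A_J` as
quasitriangular bialgebras. -/
structure TwistPair (R : A ⊗[k] A) (ψ : A ≃ₐ[k] A) (J Jinv : A ⊗[k] A) : Prop where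
  mul_inv : J * Jinv = 1
  inv_mul : Jinv * J = 1
  cocycle : emb12 k A J * copL k A J = emb23 k A J * copR k A J
  counit_left : couL k A J = 1
  counit_right : couR k A J = 1
  compat_coproduct : ∀ x : A, psiBoth k A ψ (copOp k A (ψ.symm x)) = J * cop k A x * Jinv
  compat_R : psiBoth k A ψ (flip2 k A R) = flip2 k A J * R * Jinv

/-- A cylindrical bialgebra `(A, B, ψ, J, K)`. -/
structure Cylindrical (R : A ⊗[k] A) (B : Subalgebra k A) (ψ : A ≃ₐ[k] A)
    (J Jinv : A ⊗[k] A) (K : A) : Prop where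
  qt : QTriangular k A R
  coideal : ∀ b ∈ B, cop k A b ∈ sub2 k A B
  twist : TwistPair k A R ψ J Jinv
  isUnitK : IsUnit K
  intertwine : ∀ b ∈ B, K * b = ψ b * K
  coproduct : cop k A K = Jinv * ((1 : A) ⊗ₜ[k] K) * psiL k A ψ R * (K ⊗ₜ[k] (1 : A))

/-- A reflection bialgebra `(A, B, ψ, J, 𝕂)`, the universal tensor K-matrix `𝕂` being
an element of `B ⊗ A ⊆ A ⊗ A`. -/
structure Reflection (R : A ⊗[k] A) (B : Subalgebra k A) (ψ : A ≃ₐ[k] A)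
    (J Jinv : A ⊗[k] A) (TK : A ⊗[k] A) : Prop where
  qt : QTriangular k A R
  coideal : ∀ b ∈ B, cop k A b ∈ sub2 k A B
  twist : TwistPair k A R ψ J Jinv
  support : TK ∈ sub2 k A B
  isUnitTK : IsUnit TK
  intertwine : ∀ b ∈ B, TK * cop k A b = psiR k A ψ (cop k A b) * TK
  coproduct_left : copL k A TK =
    emb23 k A (flip2 k A (psiL k A ψ R)) * emb13 k A TK * emb23 k A R
  coproduct_right : copR k A TK =
    emb23 k A Jinv * emb13 k A TK * emb23 k A (psiL k A ψ R) * emb12 k A TK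

end QSP


section Infra
variable {k A : Type*} [CommSemiring k] [Semiring A] [Bialgebra k A]

@[simp] lemma emb12_tmul (x y : A) :
    emb12 k A (x ⊗ₜ[k] y) = x ⊗ₜ[k] (y ⊗ₜ[k] (1:A)) := by
  simp [emb12]

@[simp] lemma emb13_tmul (x y : A) :
    emb13 k A (x ⊗ₜ[k] y) = x ⊗ₜ[k] ((1:A) ⊗ₜ[k] y) := by
  simp [emb13]

@[simp] lemma emb23_apply (u : A ⊗[k] A) :
    emb23 k A u = (1:A) ⊗ₜ[k] u := by
  simp [emb23]

@[simp] lemma flip2_tmul (x y : A) :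
    flip2 k A (x ⊗ₜ[k] y) = y ⊗ₜ[k] x := by
  simp [flip2]

@[simp] lemma psiL_tmul (ψ : A ≃ₐ[k] A) (x y : A) :
    psiL k A ψ (x ⊗ₜ[k] y) = ψ x ⊗ₜ[k] y := by
  simp [psiL]

@[simp] lemma psiR_tmul (ψ : A ≃ₐ[k] A) (x y : A) :
    psiR k A ψ (x ⊗ₜ[k] y) = x ⊗ₜ[k] ψ y := by
  simp [psiR]

@[simp] lemma psiBoth_tmul (ψ : A ≃ₐ[k] A) (x y : A) :
    psiBoth k A ψ (x ⊗ₜ[k] y) = ψ x ⊗ₜ[k] ψ y := by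
  simp [psiBoth]

@[simp] lemma couL_tmul (x y : A) :
    couL k A (x ⊗ₜ[k] y) = cou k A x • y := by
  simp [couL]

@[simp] lemma couR_tmul (x y : A) :
    couR k A (x ⊗ₜ[k] y) = cou k A y • x := by
  simp [couR]

@[simp] lemma copR_tmul (x y : A) :
    copR k A (x ⊗ₜ[k] y) = x ⊗ₜ[k] cop k A y := by
  simp [copR]

lemma copL_tmul (x y : A) :
    copL k A (x ⊗ₜ[k] y) =
      (Algebra.TensorProduct.assoc k k k A A A) (cop k A x ⊗ₜ[k] y) := by
  simp [copL]

lemma copOp_apply (x : A) : copOp k A x = flip2 k A (cop k A x) := rfl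

@[simp] lemma flip2_flip2 (X : A ⊗[k] A) : flip2 k A (flip2 k A X) = X := by
  induction X using TensorProduct.induction_on with
  | zero => simp
  | tmul a b => simp
  | add x y hx hy => simp [map_add, hx, hy]

lemma psiR_flip2 (ψ : A ≃ₐ[k] A) (X : A ⊗[k] A) :
    psiR k A ψ (flip2 k A X) = flip2 k A (psiL k A ψ X) := by
  induction X using TensorProduct.induction_on with
  | zero => simp
  | tmul a b => simp
  | add x y hx hy => simp [map_add, hx, hy]

lemma couL_cop (x : A) : couL k A (cop k A x) = x := by
  have h1 : ∀ t : A ⊗[k] A,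
      (Algebra.TensorProduct.map (cou k A) (AlgHom.id k A)) t =
        (Coalgebra.counit (R := k) (A := A)).rTensor A t := by
    intro t
    induction t using TensorProduct.induction_on with
    | zero => simp
    | tmul a b => simp [cou, Bialgebra.counitAlgHom_apply]
    | add x y hx hy => simp [map_add, hx, hy]
  have h2 : cop k A x = Coalgebra.comul (R := k) x := rfl
  simp [couL, h1, h2, Coalgebra.rTensor_counit_comul]

lemma couR_cop (x : A) : couR k A (cop k A x) = x := by
  have h1 : ∀ t : A ⊗[k] A,
      (Algebra.TensorProduct.map (AlgHom.id k A) (cou k A)) t =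
        (Coalgebra.counit (R := k) (A := A)).lTensor A t := by
    intro t
    induction t using TensorProduct.induction_on with
    | zero => simp
    | tmul a b => simp [cou, Bialgebra.counitAlgHom_apply]
    | add x y hx hy => simp [map_add, hx, hy]
  have h2 : cop k A x = Coalgebra.comul (R := k) x := rfl
  simp [couR, h1, h2, Coalgebra.lTensor_counit_comul]

lemma couL_flip2 (X : A ⊗[k] A) : couL k A (flip2 k A X) = couR k A X := by
  induction X using TensorProduct.induction_on with
  | zero => simp
  | tmul a b => simp
  | add x y hx hy => simp [map_add, hx, hy]

lemma couR_psiL (ψ : A ≃ₐ[k] A) (X : A ⊗[k] A) :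
    couR k A (psiL k A ψ X) = ψ (couR k A X) := by
  induction X using TensorProduct.induction_on with
  | zero => simp
  | tmul a b => simp
  | add x y hx hy => simp [map_add, hx, hy]

end Infra


section Perm
variable (k A : Type*) [CommSemiring k] [Semiring A] [Algebra k A]

noncomputable def permC : A ⊗[k] (A ⊗[k] A) →ₐ[k] A ⊗[k] (A ⊗[k] A) :=
  (Algebra.TensorProduct.assoc k k k A A A).toAlgHom.comp
    (Algebra.TensorProduct.comm k A (A ⊗[k] A)).toAlgHom

noncomputable def perm23 : A ⊗[k] (A ⊗[k] A) →ₐ[k] A ⊗[k] (A ⊗[k] A) :=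
  Algebra.TensorProduct.map (AlgHom.id k A) (flip2 k A).toAlgHom

noncomputable def permP : A ⊗[k] (A ⊗[k] A) →ₐ[k] A ⊗[k] (A ⊗[k] A) :=
  (permC k A).comp (permC k A)

noncomputable def perm12 : A ⊗[k] (A ⊗[k] A) →ₐ[k] A ⊗[k] (A ⊗[k] A) :=
  (perm23 k A).comp (permC k A)

noncomputable def psi2 (ψ : A ≃ₐ[k] A) : A ⊗[k] (A ⊗[k] A) →ₐ[k] A ⊗[k] (A ⊗[k] A) :=
  Algebra.TensorProduct.map (AlgHom.id k A) (psiL k A ψ)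

noncomputable def psi3 (ψ : A ≃ₐ[k] A) : A ⊗[k] (A ⊗[k] A) →ₐ[k] A ⊗[k] (A ⊗[k] A) :=
  Algebra.TensorProduct.map (AlgHom.id k A) (psiR k A ψ)

noncomputable def psi23 (ψ : A ≃ₐ[k] A) : A ⊗[k] (A ⊗[k] A) →ₐ[k] A ⊗[k] (A ⊗[k] A) :=
  Algebra.TensorProduct.map (AlgHom.id k A) (psiBoth k A ψ)

end Perm

section PermLemmas
variable {k A : Type*} [CommSemiring k] [Semiring A] [Bialgebra k A]

@[simp] lemma permC_tmul (a b c : A) :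
    permC k A (a ⊗ₜ[k] (b ⊗ₜ[k] c)) = b ⊗ₜ[k] (c ⊗ₜ[k] a) := by
  simp [permC]

@[simp] lemma perm23_tmul (x : A) (t : A ⊗[k] A) :
    perm23 k A (x ⊗ₜ[k] t) = x ⊗ₜ[k] flip2 k A t := by
  simp [perm23]

@[simp] lemma permP_tmul (a b c : A) :
    permP k A (a ⊗ₜ[k] (b ⊗ₜ[k] c)) = c ⊗ₜ[k] (a ⊗ₜ[k] b) := by
  simp [permP]

@[simp] lemma perm12_tmul (a b c : A) :
    perm12 k A (a ⊗ₜ[k] (b ⊗ₜ[k] c)) = b ⊗ₜ[k] (a ⊗ₜ[k] c) := by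
  simp [perm12]

variable (ψ : A ≃ₐ[k] A)

@[simp] lemma psi2_tmul (x : A) (t : A ⊗[k] A) :
    psi2 k A ψ (x ⊗ₜ[k] t) = x ⊗ₜ[k] psiL k A ψ t := by
  simp [psi2]

@[simp] lemma psi3_tmul (x : A) (t : A ⊗[k] A) :
    psi3 k A ψ (x ⊗ₜ[k] t) = x ⊗ₜ[k] psiR k A ψ t := by
  simp [psi3]

@[simp] lemma psi23_tmul (x : A) (t : A ⊗[k] A) :
    psi23 k A ψ (x ⊗ₜ[k] t) = x ⊗ₜ[k] psiBoth k A ψ t := by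
  simp [psi23]

lemma permC_emb12 (X : A ⊗[k] A) : permC k A (emb12 k A X) = emb13 k A (flip2 k A X) := by
  induction X using TensorProduct.induction_on with
  | zero => simp
  | tmul a b => simp
  | add x y hx hy => simp only [map_add, hx, hy]

lemma permC_emb13 (X : A ⊗[k] A) : permC k A (emb13 k A X) = emb23 k A (flip2 k A X) := by
  induction X using TensorProduct.induction_on with
  | zero => simp
  | tmul a b => simp
  | add x y hx hy => simp only [map_add, hx, hy]

lemma permC_emb23 (X : A ⊗[k] A) : permC k A (emb23 k A X) = emb12 k A X := by
  induction X using TensorProduct.induction_on with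
  | zero => simp
  | tmul a b => simp
  | add x y hx hy =>
      simp only [emb23_apply, tmul_add] at hx hy ⊢
      simp only [map_add, hx, hy]

lemma permP_emb13 (X : A ⊗[k] A) : permP k A (emb13 k A X) = emb12 k A (flip2 k A X) := by
  simp only [permP, AlgHom.coe_comp, Function.comp_apply, permC_emb13, permC_emb23]

lemma permP_emb23 (X : A ⊗[k] A) : permP k A (emb23 k A X) = emb13 k A (flip2 k A X) := by
  simp only [permP, AlgHom.coe_comp, Function.comp_apply, permC_emb23, permC_emb12]

lemma perm23_emb12 (X : A ⊗[k] A) : perm23 k A (emb12 k A X) = emb13 k A X := by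
  induction X using TensorProduct.induction_on with
  | zero => simp
  | tmul a b => simp
  | add x y hx hy => simp only [map_add, hx, hy]

lemma perm23_emb13 (X : A ⊗[k] A) : perm23 k A (emb13 k A X) = emb12 k A X := by
  induction X using TensorProduct.induction_on with
  | zero => simp
  | tmul a b => simp
  | add x y hx hy => simp only [map_add, hx, hy]

lemma perm12_emb12 (X : A ⊗[k] A) : perm12 k A (emb12 k A X) = emb12 k A (flip2 k A X) := by
  simp only [perm12, AlgHom.coe_comp, Function.comp_apply, permC_emb12, perm23_emb13]

lemma perm12_emb13 (X : A ⊗[k] A) : perm12 k A (emb13 k A X) = emb23 k A X := by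
  simp only [perm12, AlgHom.coe_comp, Function.comp_apply, permC_emb13, emb23_apply,
    perm23_tmul, flip2_flip2]

lemma perm12_emb23 (X : A ⊗[k] A) : perm12 k A (emb23 k A X) = emb13 k A X := by
  simp only [perm12, AlgHom.coe_comp, Function.comp_apply, permC_emb23, perm23_emb12]

lemma psi2_emb12 (X : A ⊗[k] A) : psi2 k A ψ (emb12 k A X) = emb12 k A (psiR k A ψ X) := by
  induction X using TensorProduct.induction_on with
  | zero => simp
  | tmul a b => simp
  | add x y hx hy => simp only [map_add, hx, hy]

lemma psi2_emb13 (X : A ⊗[k] A) : psi2 k A ψ (emb13 k A X) = emb13 k A X := by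
  induction X using TensorProduct.induction_on with
  | zero => simp
  | tmul a b => simp
  | add x y hx hy => simp only [map_add, hx, hy]

lemma psi2_emb23 (X : A ⊗[k] A) : psi2 k A ψ (emb23 k A X) = emb23 k A (psiL k A ψ X) := by
  simp

lemma psi3_emb13 (X : A ⊗[k] A) : psi3 k A ψ (emb13 k A X) = emb13 k A (psiR k A ψ X) := by
  induction X using TensorProduct.induction_on with
  | zero => simp
  | tmul a b => simp
  | add x y hx hy => simp only [map_add, hx, hy]

lemma psi3_emb23 (X : A ⊗[k] A) : psi3 k A ψ (emb23 k A X) = emb23 k A (psiR k A ψ X) := by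
  simp

lemma psi23_emb12 (X : A ⊗[k] A) : psi23 k A ψ (emb12 k A X) = emb12 k A (psiR k A ψ X) := by
  induction X using TensorProduct.induction_on with
  | zero => simp
  | tmul a b => simp
  | add x y hx hy => simp only [map_add, hx, hy]

lemma psi23_emb13 (X : A ⊗[k] A) : psi23 k A ψ (emb13 k A X) = emb13 k A (psiR k A ψ X) := by
  induction X using TensorProduct.induction_on with
  | zero => simp
  | tmul a b => simp
  | add x y hx hy => simp only [map_add, hx, hy]

end PermLemmas


section CopLemmas
variable {k A : Type*} [CommSemiring k] [Semiring A] [Bialgebra k A]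

private lemma assoc_swap (t : A ⊗[k] A) (x : A) :
    (Algebra.TensorProduct.assoc k k k A A A) (t ⊗ₜ[k] x) = permC k A (x ⊗ₜ[k] t) := by
  induction t using TensorProduct.induction_on with
  | zero => simp
  | tmul a b => simp
  | add u v hu hv => simp only [add_tmul, tmul_add, map_add, hu, hv]

lemma copL_flip2_eq (X : A ⊗[k] A) : copL k A (flip2 k A X) = permC k A (copR k A X) := by
  induction X using TensorProduct.induction_on with
  | zero => simp
  | tmul x y => rw [flip2_tmul, copL_tmul, copR_tmul, assoc_swap]
  | add x y hx hy => simp only [map_add, hx, hy]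

private lemma permP_assoc (t : A ⊗[k] A) (y : A) :
    permP k A ((Algebra.TensorProduct.assoc k k k A A A) (t ⊗ₜ[k] y)) = y ⊗ₜ[k] t := by
  induction t using TensorProduct.induction_on with
  | zero => simp
  | tmul a b => simp
  | add u v hu hv => simp only [add_tmul, tmul_add, map_add, hu, hv]

lemma copR_flip2_eq (X : A ⊗[k] A) : copR k A (flip2 k A X) = permP k A (copL k A X) := by
  induction X using TensorProduct.induction_on with
  | zero => simp
  | tmul x y => rw [flip2_tmul, copR_tmul, copL_tmul, permP_assoc]
  | add x y hx hy => simp only [map_add, hx, hy]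

private lemma psi3_assoc (ψ : A ≃ₐ[k] A) (t : A ⊗[k] A) (y : A) :
    psi3 k A ψ ((Algebra.TensorProduct.assoc k k k A A A) (t ⊗ₜ[k] y)) =
      (Algebra.TensorProduct.assoc k k k A A A) (t ⊗ₜ[k] ψ y) := by
  induction t using TensorProduct.induction_on with
  | zero => simp
  | tmul a b => simp
  | add u v hu hv => simp only [add_tmul, map_add, hu, hv]

lemma psi3_copL (ψ : A ≃ₐ[k] A) (X : A ⊗[k] A) :
    psi3 k A ψ (copL k A X) = copL k A (psiR k A ψ X) := by
  induction X using TensorProduct.induction_on with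
  | zero => simp
  | tmul x y => rw [copL_tmul, psi3_assoc, psiR_tmul, copL_tmul]
  | add x y hx hy => simp only [map_add, hx, hy]

end CopLemmas

section Elim
variable (k A : Type*) [CommSemiring k] [Semiring A] [Bialgebra k A]

noncomputable def elimL : A ⊗[k] (A ⊗[k] A) →ₐ[k] A ⊗[k] A :=
  (Algebra.TensorProduct.lid k (A ⊗[k] A)).toAlgHom.comp
    (Algebra.TensorProduct.map (cou k A) (AlgHom.id k (A ⊗[k] A)))

noncomputable def elimR : A ⊗[k] (A ⊗[k] A) →ₐ[k] A ⊗[k] A :=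
  Algebra.TensorProduct.map (AlgHom.id k A) (couR k A)

variable {k A}

@[simp] lemma elimL_tmul (x : A) (t : A ⊗[k] A) :
    elimL k A (x ⊗ₜ[k] t) = cou k A x • t := by
  simp [elimL]

@[simp] lemma elimR_tmul (x : A) (t : A ⊗[k] A) :
    elimR k A (x ⊗ₜ[k] t) = x ⊗ₜ[k] couR k A t := by
  simp [elimR]

private lemma elimL_assoc (t : A ⊗[k] A) (y : A) :
    elimL k A ((Algebra.TensorProduct.assoc k k k A A A) (t ⊗ₜ[k] y)) = couL k A t ⊗ₜ[k] y := by
  induction t using TensorProduct.induction_on with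
  | zero => simp
  | tmul a b => simp [smul_tmul']
  | add u v hu hv => simp only [add_tmul, map_add, hu, hv]

lemma elimL_copL (Z : A ⊗[k] A) : elimL k A (copL k A Z) = Z := by
  induction Z using TensorProduct.induction_on with
  | zero => simp
  | tmul x y => rw [copL_tmul, elimL_assoc, couL_cop]
  | add x y hx hy => simp only [map_add, hx, hy]

lemma elimL_emb13 (X : A ⊗[k] A) : elimL k A (emb13 k A X) = (1:A) ⊗ₜ[k] couL k A X := by
  induction X using TensorProduct.induction_on with
  | zero => simp
  | tmul a b => simp [tmul_smul]
  | add x y hx hy => simp only [map_add, hx, hy, tmul_add]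

lemma elimL_emb23 (X : A ⊗[k] A) : elimL k A (emb23 k A X) = X := by
  simp

lemma elimR_copR (Z : A ⊗[k] A) : elimR k A (copR k A Z) = Z := by
  induction Z using TensorProduct.induction_on with
  | zero => simp
  | tmul x y => rw [copR_tmul, elimR_tmul, couR_cop]
  | add x y hx hy => simp only [map_add, hx, hy]

lemma elimR_emb13 (X : A ⊗[k] A) : elimR k A (emb13 k A X) = couR k A X ⊗ₜ[k] (1:A) := by
  induction X using TensorProduct.induction_on with
  | zero => simp
  | tmul a b => simp [tmul_smul, smul_tmul']
  | add x y hx hy => simp only [map_add, hx, hy, add_tmul]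

lemma elimR_emb12 (X : A ⊗[k] A) : elimR k A (emb12 k A X) = X := by
  induction X using TensorProduct.induction_on with
  | zero => simp
  | tmul a b => simp
  | add x y hx hy => simp only [map_add, hx, hy]

end Elim

set_option maxHeartbeats 1600000 in
/-- Let `(A, B, ψ, J, K)` be a cylindrical bialgebra and set
`𝕂 = R^ψ₂₁ · (1 ⊗ K) · R`. Then `𝕂` satisfies the intertwining identity, the two
coproduct identities and `(ε ⊗ id)(𝕂) = K`; consequently `(A, B, ψ, J, 𝕂)` is a
reflection bialgebra if and only if `𝕂 ∈ B ⊗ A`. -/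
theorem cylindrical_to_reflection
    {k A : Type*} [Field k] [Ring A] [Bialgebra k A]
    (R : A ⊗[k] A) (B : Subalgebra k A) (ψ : A ≃ₐ[k] A) (J Jinv : A ⊗[k] A) (K : A)
    (hcyl : Cylindrical k A R B ψ J Jinv K)
    (TK : A ⊗[k] A)
    (hTK : TK = flip2 k A (psiL k A ψ R) * ((1 : A) ⊗ₜ[k] K) * R) :
    -- (1) intertwining identity
    (∀ b ∈ B, TK * cop k A b = psiR k A ψ (cop k A b) * TK) ∧
    -- (2) first coproduct identity
    (copL k A TK =
      emb23 k A (flip2 k A (psiL k A ψ R)) * emb13 k A TK * emb23 k A R) ∧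
    -- (3) second coproduct identity
    (copR k A TK =
      emb23 k A Jinv * emb13 k A TK * emb23 k A (psiL k A ψ R) * emb12 k A TK) ∧
    -- (4) (ε ⊗ id)(𝕂) = K
    (couL k A TK = K) ∧
    -- consequently: reflection bialgebra ⟺ support condition
    (Reflection k A R B ψ J Jinv TK ↔ TK ∈ sub2 k A B) := by
  obtain ⟨qt, coideal, tw, hKu, hKb, hcopK⟩ := hcyl
  -- counit facts
  have hcouR_R : couR k A R = 1 := by
    have h := congrArg (elimR k A) qt.coproduct_right
    rw [elimR_copR, map_mul, elimR_emb13, elimR_emb12] at h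
    have h2 : couR k A R ⊗ₜ[k] (1:A) = 1 :=
      qt.isUnit.mul_right_cancel (by rw [one_mul, ← h])
    have h3 := congrArg (couR k A) h2
    simpa using h3
  have hcouL_R : couL k A R = 1 := by
    have h := congrArg (elimL k A) qt.coproduct_left
    rw [elimL_copL, map_mul, elimL_emb13, elimL_emb23] at h
    have h2 : (1:A) ⊗ₜ[k] couL k A R = 1 :=
      qt.isUnit.mul_right_cancel (by rw [one_mul, ← h])
    have h3 := congrArg (couL k A) h2
    simpa using h3
  -- part (4)
  have part4 : couL k A TK = K := by
    rw [hTK, map_mul, map_mul, couL_flip2, couR_psiL, hcouR_R, hcouL_R, map_one, couL_tmul]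
    simp
  -- part (1)
  have hspan : ∀ t ∈ sub2 k A B,
      ((1:A) ⊗ₜ[k] K) * flip2 k A t = psiR k A ψ (flip2 k A t) * ((1:A) ⊗ₜ[k] K) := by
    intro t ht
    induction ht using Submodule.span_induction with
    | mem x hx =>
        obtain ⟨a, haB, b, rfl⟩ := hx
        simp only [flip2_tmul, psiR_tmul, Algebra.TensorProduct.tmul_mul_tmul,
          one_mul, mul_one, hKb a haB]
    | zero => simp
    | add x y _ _ hx hy => simp only [map_add, mul_add, add_mul, hx, hy]
    | smul c x _ hx =>
        simp only [map_smul, mul_smul_comm, smul_mul_assoc, hx]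
  have hIc : ∀ b : A, flip2 k A R * copOp k A b = cop k A b * flip2 k A R := by
    intro b
    have h := congrArg (flip2 k A) (qt.intertwine b)
    rwa [map_mul, map_mul, copOp_apply, flip2_flip2, ← copOp_apply] at h
  have hstep3 : ∀ b : A,
      flip2 k A (psiL k A ψ R) * psiR k A ψ (copOp k A b) =
        psiR k A ψ (cop k A b) * flip2 k A (psiL k A ψ R) := by
    intro b
    have h := congrArg (psiR k A ψ) (hIc b)
    rwa [map_mul, map_mul, psiR_flip2] at h
  have part1 : ∀ b ∈ B, TK * cop k A b = psiR k A ψ (cop k A b) * TK := by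
    intro b hb
    have e1 : R * cop k A b = copOp k A b * R := qt.intertwine b
    have e2 : ((1:A) ⊗ₜ[k] K) * copOp k A b =
        psiR k A ψ (copOp k A b) * ((1:A) ⊗ₜ[k] K) := by
      have h := hspan (cop k A b) (coideal b hb)
      rwa [← copOp_apply] at h
    have e2' : ∀ z, ((1:A) ⊗ₜ[k] K) * (copOp k A b * z) =
        psiR k A ψ (copOp k A b) * (((1:A) ⊗ₜ[k] K) * z) := fun z => by
      rw [← mul_assoc, e2, mul_assoc]
    have e3' : ∀ z, flip2 k A (psiL k A ψ R) * (psiR k A ψ (copOp k A b) * z) =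
        psiR k A ψ (cop k A b) * (flip2 k A (psiL k A ψ R) * z) := fun z => by
      rw [← mul_assoc, hstep3 b, mul_assoc]
    rw [hTK]
    simp only [mul_assoc]
    rw [e1, e2', e3']
  -- part (2)
  have hcopLσR : copL k A (flip2 k A R) =
      emb23 k A (flip2 k A R) * emb13 k A (flip2 k A R) := by
    rw [copL_flip2_eq, qt.coproduct_right, map_mul, permC_emb13, permC_emb12]
  have hcopLσRψ : copL k A (flip2 k A (psiL k A ψ R)) =
      emb23 k A (flip2 k A (psiL k A ψ R)) * emb13 k A (flip2 k A (psiL k A ψ R)) := by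
    have h := congrArg (psi3 k A ψ) hcopLσR
    simp only [psi3_copL, map_mul, psi3_emb23, psi3_emb13, psiR_flip2] at h
    exact h
  have hcopL1K : copL k A ((1:A) ⊗ₜ[k] K) = (1:A) ⊗ₜ[k] ((1:A) ⊗ₜ[k] K) := by
    rw [copL_tmul, map_one, Algebra.TensorProduct.one_def, Algebra.TensorProduct.assoc_tmul]
  have part2 : copL k A TK =
      emb23 k A (flip2 k A (psiL k A ψ R)) * emb13 k A TK * emb23 k A R := by
    rw [hTK]
    simp only [map_mul, hcopLσRψ, hcopL1K, qt.coproduct_left, emb13_tmul]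
    simp only [mul_assoc]
  -- Yang--Baxter
  have hH2a : ∀ X : A ⊗[k] A,
      emb23 k A R * copR k A X = perm23 k A (copR k A X) * emb23 k A R := by
    intro X
    induction X using TensorProduct.induction_on with
    | zero => simp
    | tmul x y =>
        simp only [copR_tmul, perm23_tmul, emb23_apply,
          Algebra.TensorProduct.tmul_mul_tmul, one_mul, mul_one]
        rw [qt.intertwine y, copOp_apply]
    | add x y hx hy => simp only [map_add, mul_add, add_mul, hx, hy]
  have hQYBE : emb23 k A R * (emb13 k A R * emb12 k A R) =
      emb12 k A R * (emb13 k A R * emb23 k A R) := by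
    have h := hH2a R
    rw [qt.coproduct_right, map_mul, perm23_emb13, perm23_emb12] at h
    rw [h, mul_assoc]
  have hH3 : emb13 k A R * (emb23 k A R * emb12 k A (flip2 k A R)) =
      emb12 k A (flip2 k A R) * (emb23 k A R * emb13 k A R) := by
    have h := congrArg (perm12 k A) hQYBE
    simpa only [map_mul, perm12_emb23, perm12_emb13, perm12_emb12] using h
  have hH4 : emb13 k A R * (emb23 k A (psiL k A ψ R) * emb12 k A (flip2 k A (psiL k A ψ R))) =
      emb12 k A (flip2 k A (psiL k A ψ R)) * (emb23 k A (psiL k A ψ R) * emb13 k A R) := by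
    have h := congrArg (psi2 k A ψ) hH3
    simpa only [map_mul, psi2_emb13, psi2_emb23, psi2_emb12, psiR_flip2] using h
  -- twisted coproduct of the flipped twisted R-matrix
  have hJc : ∀ c : A ⊗[k] A, Jinv * (J * c * Jinv * J) = c := by
    intro c
    rw [mul_assoc (J * c) Jinv J, tw.inv_mul, mul_one, ← mul_assoc, tw.inv_mul, one_mul]
  have hcompat' : ∀ y : A, cop k A (ψ y) = Jinv * (psiBoth k A ψ (copOp k A y) * J) := by
    intro y
    have h := tw.compat_coproduct (ψ y)
    rw [ψ.symm_apply_apply] at h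
    rw [h, hJc]
  have hH1a : ∀ X : A ⊗[k] A, copR k A (psiR k A ψ X) =
      emb23 k A Jinv * (psi23 k A ψ (perm23 k A (copR k A X)) * emb23 k A J) := by
    intro X
    induction X using TensorProduct.induction_on with
    | zero => simp
    | tmul x y =>
        simp only [psiR_tmul, copR_tmul, perm23_tmul, psi23_tmul, emb23_apply,
          Algebra.TensorProduct.tmul_mul_tmul, one_mul, mul_one]
        rw [hcompat' y, copOp_apply]
    | add x y hx hy => simp only [map_add, mul_add, add_mul, hx, hy]
  have hcopRσR : copR k A (flip2 k A R) =
      emb12 k A (flip2 k A R) * emb13 k A (flip2 k A R) := by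
    rw [copR_flip2_eq, qt.coproduct_left, map_mul, permP_emb13, permP_emb23]
  have hH1 : copR k A (flip2 k A (psiL k A ψ R)) =
      emb23 k A Jinv * ((emb13 k A (flip2 k A (psiL k A ψ R)) *
        emb12 k A (flip2 k A (psiL k A ψ R))) * emb23 k A J) := by
    have h := hH1a (flip2 k A R)
    rw [psiR_flip2] at h
    rw [hcopRσR, map_mul, perm23_emb12, perm23_emb13, map_mul, psi23_emb13, psi23_emb12,
      psiR_flip2] at h
    exact h
  -- commutation of slot-wise K factors
  have hK3comm : ∀ X : A ⊗[k] A,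
      emb12 k A X * ((1:A) ⊗ₜ[k] ((1:A) ⊗ₜ[k] K)) =
        ((1:A) ⊗ₜ[k] ((1:A) ⊗ₜ[k] K)) * emb12 k A X := by
    intro X
    induction X using TensorProduct.induction_on with
    | zero => simp
    | tmul a b => simp [Algebra.TensorProduct.tmul_mul_tmul]
    | add x y hx hy => simp only [map_add, mul_add, add_mul, hx, hy]
  have hK2comm : ∀ X : A ⊗[k] A,
      ((1:A) ⊗ₜ[k] (K ⊗ₜ[k] (1:A))) * emb13 k A X =
        emb13 k A X * ((1:A) ⊗ₜ[k] (K ⊗ₜ[k] (1:A))) := by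
    intro X
    induction X using TensorProduct.induction_on with
    | zero => simp
    | tmul a b => simp [Algebra.TensorProduct.tmul_mul_tmul]
    | add x y hx hy => simp only [map_add, mul_add, add_mul, hx, hy]
  -- part (3)
  have part3 : copR k A TK =
      emb23 k A Jinv * emb13 k A TK * emb23 k A (psiL k A ψ R) * emb12 k A TK := by
    have hJJ : ∀ z : A ⊗[k] (A ⊗[k] A),
        ((1:A) ⊗ₜ[k] J) * (((1:A) ⊗ₜ[k] Jinv) * z) = z := fun z => by
      rw [← mul_assoc, Algebra.TensorProduct.tmul_mul_tmul, one_mul, tw.mul_inv,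
        ← Algebra.TensorProduct.one_def, one_mul]
    have hS2 : ∀ z, emb12 k A (flip2 k A (psiL k A ψ R)) *
          (((1:A) ⊗ₜ[k] ((1:A) ⊗ₜ[k] K)) * z) =
        ((1:A) ⊗ₜ[k] ((1:A) ⊗ₜ[k] K)) *
          (emb12 k A (flip2 k A (psiL k A ψ R)) * z) := fun z => by
      rw [← mul_assoc, hK3comm, mul_assoc]
    have hS3 : ∀ z, ((1:A) ⊗ₜ[k] (K ⊗ₜ[k] (1:A))) * (emb13 k A R * z) =
        emb13 k A R * (((1:A) ⊗ₜ[k] (K ⊗ₜ[k] (1:A))) * z) := fun z => by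
      rw [← mul_assoc, hK2comm, mul_assoc]
    have hH4' := hH4
    simp only [emb23_apply, ← mul_assoc] at hH4'
    have hS4 : ∀ z, emb12 k A (flip2 k A (psiL k A ψ R)) *
          (((1:A) ⊗ₜ[k] psiL k A ψ R) * (emb13 k A R * z)) =
        emb13 k A R * (((1:A) ⊗ₜ[k] psiL k A ψ R) *
          (emb12 k A (flip2 k A (psiL k A ψ R)) * z)) := fun z => by
      simp only [← mul_assoc]
      rw [← hH4']
    rw [hTK]
    simp only [map_mul]
    rw [hH1, copR_tmul, hcopK, ← emb23_apply (Jinv * ((1:A) ⊗ₜ[k] K) * psiL k A ψ R *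
      (K ⊗ₜ[k] (1:A))), map_mul, map_mul, map_mul, qt.coproduct_right]
    simp only [emb23_apply, emb13_tmul, emb12_tmul]
    simp only [mul_assoc]
    rw [hJJ, hS2, hS3, hS4]
  -- TK is invertible
  have hTKunit : IsUnit TK := by
    have h1 : IsUnit (flip2 k A (psiL k A ψ R)) :=
      (qt.isUnit.map (psiL k A ψ)).map (flip2 k A)
    have h2 : IsUnit ((1:A) ⊗ₜ[k] K) := by
      have := hKu.map (Algebra.TensorProduct.includeRight (R := k) (A := A) (B := A))
      rwa [Algebra.TensorProduct.includeRight_apply] at this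
    rw [hTK]
    exact (h1.mul h2).mul qt.isUnit
  refine ⟨part1, part2, part3, part4, ⟨fun h => h.support, fun hs => ?_⟩⟩
  exact ⟨qt, coideal, tw, hs, hTKunit, part1, part2, part3⟩
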